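/- Let m be an even positive integer. The map sending a pair (θ, (ĝ_0, ..., ĝ_{m−1})) with 0 ≤ θ ≤ m/2 − 1 and (ĝ_0, ..., ĝ_{m−1}) ∈ Ĺ_{m,θ} to the point (g_0, g_1, ..., g_{m−1}, h) given by g_s = (1/m) Σ_{t=0}^{m−1} ζ_m^{st} ĝ_t for s = 0, ..., m − 1 and h = ζ_{m/2}^θ is a bijection from the disjoint union of the sets Ĺ_{m,θ} over θ = 0, ..., m/2 − 1 onto L_m. -/

import Mathlib

/-- The system of order `m` on `g`-level, in unknowns `(g_0, …, g_{m-1}, h)`,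
with subscripts of `g` read modulo `m`. -/
def GLevel (m : ℕ) (g : ZMod m → ℂ) (h : ℂ) : Prop :=
  (∀ s : ℕ, 1 ≤ s → s ≤ m / 2 - 1 →
    ∑ t ∈ Finset.range m,
      (-1 : ℂ) ^ t * g (t : ZMod m) * g ((2 * (s : ℤ) - (t : ℤ) : ℤ) : ZMod m) = 0) ∧
  (∀ s : ℕ, 1 ≤ s → s ≤ m / 2 →
    g (s : ZMod m) * g ((m - s : ℕ) : ZMod m) = (-1 : ℂ) ^ s) ∧
  (∀ s : ℕ, 1 ≤ s → s ≤ m / 2 - 1 →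
    h ^ s * g (s : ZMod m) * g ((m / 2 + s : ℕ) : ZMod m)
      = g ((2 * s : ℕ) : ZMod m) * g ((m / 2 : ℕ) : ZMod m)) ∧
  h ^ (m / 2) = 1

/-- The system of order `m` on `(ĝ, θ)`-level, in unknowns `(ĝ_0, …, ĝ_{m-1})`,
with subscripts of `ĝ` read modulo `m`. -/
def GhatLevel (m : ℕ) (θ : ℕ) (gh : ZMod m → ℂ) : Prop :=
  (∀ s : ℕ, s ≤ m / 2 - 1 →
    (m : ℂ) ^ 2 * gh (s : ZMod m) * gh ((m / 2 + s : ℕ) : ZMod m) =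
      (∑ t ∈ Finset.range m, gh (t : ZMod m)) ^ 2 + (m : ℂ) ^ 2 * ((m : ℂ) - 1)) ∧
  (∀ s : ℕ, s ≤ m / 2 - 1 →
    (m : ℂ) * ∑ t ∈ Finset.range m, gh (t : ZMod m) * gh ((s + t : ℕ) : ZMod m) =
      (∑ t ∈ Finset.range m, gh (t : ZMod m)) ^ 2 - (m : ℂ) ^ 2) ∧
  (∀ s : ℕ, s ≤ m / 2 - 1 →
    ∑ t ∈ Finset.range m,
        (-1 : ℂ) ^ t * gh (t : ZMod m) *
          gh ((2 * (s : ℤ) - 2 * (θ : ℤ) - (t : ℤ) : ℤ) : ZMod m) =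
      (gh (s : ZMod m) + gh ((m / 2 + s : ℕ) : ZMod m)) *
        ∑ t ∈ Finset.range m, (-1 : ℂ) ^ t * gh (t : ZMod m))

namespace Stmt12

open Finset Complex

noncomputable def ζm (m : ℕ) : ℂ := Complex.exp (2 * Real.pi * Complex.I / m)

noncomputable def ee (m : ℕ) (x : ZMod m) : ℂ := ζm m ^ x.val

variable {m : ℕ}

lemma zprim [NeZero m] : IsPrimitiveRoot (ζm m) m :=
  Complex.isPrimitiveRoot_exp m (NeZero.ne m)

lemma zpow_m [NeZero m] : ζm m ^ m = 1 := zprim.pow_eq_one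

lemma zpow_mod [NeZero m] (a : ℕ) : ζm m ^ (a % m) = ζm m ^ a :=
  (pow_eq_pow_mod a zpow_m).symm

lemma ee_natCast [NeZero m] (a : ℕ) : ee m (a : ZMod m) = ζm m ^ a := by
  rw [ee, ZMod.val_natCast, zpow_mod]

lemma ee_zero : ee m 0 = 1 := by simp [ee]

lemma ee_add [NeZero m] (x y : ZMod m) : ee m (x + y) = ee m x * ee m y := by
  rw [ee, ee, ee, ZMod.val_add, zpow_mod, pow_add]

lemma ee_mul_neg [NeZero m] (x : ZMod m) : ee m x * ee m (-x) = 1 := by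
  rw [← ee_add, add_neg_cancel, ee_zero]

lemma ee_ne_one [NeZero m] {z : ZMod m} (hz : z ≠ 0) : ee m z ≠ 1 := by
  have h1 : 0 < z.val := ZMod.val_pos.mpr hz
  exact zprim.pow_ne_one_of_pos_of_lt h1.ne' (ZMod.val_lt z)

lemma sum_ee [NeZero m] (z : ZMod m) :
    ∑ x : ZMod m, ee m (x * z) = if z = 0 then (m : ℂ) else 0 := by
  by_cases hz : z = 0
  · simp [hz, ee_zero, ZMod.card]
  · rw [if_neg hz]
    have key : ee m z * ∑ x : ZMod m, ee m (x * z) = ∑ x : ZMod m, ee m (x * z) := by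
      rw [Finset.mul_sum]
      have : ∀ x : ZMod m, ee m z * ee m (x * z) = ee m ((x + 1) * z) := by
        intro x; rw [← ee_add]; ring_nf
      simp_rw [this]
      exact Fintype.sum_equiv (Equiv.addRight (1 : ZMod m))
        (fun x => ee m ((x + 1) * z)) (fun x => ee m (x * z)) (fun x => rfl)
    have := sub_eq_zero.mpr key
    rw [← sub_one_mul] at this
    rcases mul_eq_zero.mp this with h | h
    · exact absurd (sub_eq_zero.mp h) (ee_ne_one hz)
    · exact h

lemma sum_range_eq [NeZero m] (f : ZMod m → ℂ) :
    ∑ t ∈ Finset.range m, f (t : ZMod m) = ∑ x : ZMod m, f x := by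
  refine Finset.sum_nbij' (fun t => (t : ZMod m)) (fun x => x.val) ?_ ?_ ?_ ?_ ?_
  · intro a _; exact Finset.mem_univ _
  · intro a _; exact Finset.mem_range.mpr (ZMod.val_lt a)
  · intro a ha; exact ZMod.val_natCast_of_lt (Finset.mem_range.mp ha)
  · intro a _; simp [ZMod.natCast_val, ZMod.cast_id]
  · intro a _; rfl


section Half
variable {n : ℕ} (h2n : m = 2 * n) (hn0 : 0 < n)
include h2n hn0

lemma mpos : 0 < m := by omega

lemma zpow_n : ζm m ^ n = -1 := by
  have hm : (m : ℂ) = 2 * n := by rw [h2n]; push_cast; ring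
  have hnne : (n : ℂ) ≠ 0 := Nat.cast_ne_zero.mpr hn0.ne'
  have hmne : (m : ℂ) ≠ 0 := by rw [hm]; simp [hnne]
  rw [ζm, ← Complex.exp_nat_mul]
  have harg : (n : ℂ) * (2 * Real.pi * Complex.I / m) = Real.pi * Complex.I := by
    rw [hm]; field_simp
  rw [harg, Complex.exp_pi_mul_I]

lemma instNZ : NeZero m := ⟨(mpos h2n hn0).ne'⟩

lemma ee_nmul (x : ZMod m) :
    ee m ((n : ZMod m) * x) = (-1 : ℂ) ^ x.val := by
  haveI := instNZ h2n hn0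
  have hx : ((x.val : ℕ) : ZMod m) = x := by rw [ZMod.natCast_val, ZMod.cast_id]
  have h1 : (n : ZMod m) * x = ((n * x.val : ℕ) : ZMod m) := by
    rw [Nat.cast_mul, hx]
  rw [h1, ee_natCast, pow_mul, zpow_n h2n hn0]

lemma Nval : ((n : ZMod m)).val = n := by
  haveI := instNZ h2n hn0
  exact ZMod.val_natCast_of_lt (by omega)

lemma N_ne_zero : (n : ZMod m) ≠ 0 := by
  haveI := instNZ h2n hn0
  intro h
  have := Nval h2n hn0
  rw [h, ZMod.val_zero] at this; omega

lemma twoN : (n : ZMod m) + (n : ZMod m) = 0 := by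
  have : ((n : ZMod m)) + n = ((2 * n : ℕ) : ZMod m) := by push_cast; ring
  rw [this, ← h2n, ZMod.natCast_self]

lemma two_mul_eq_zero_iff (x : ZMod m) :
    2 * x = 0 ↔ x = 0 ∨ x = (n : ZMod m) := by
  haveI := instNZ h2n hn0
  have hx : ((x.val : ℕ) : ZMod m) = x := by rw [ZMod.natCast_val, ZMod.cast_id]
  constructor
  · intro h
    have h1 : 2 * x = ((2 * x.val : ℕ) : ZMod m) := by
      rw [Nat.cast_mul, hx]; norm_num
    rw [h1, ZMod.natCast_eq_zero_iff] at h
    have hlt : x.val < m := ZMod.val_lt x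
    rcases h with ⟨c, hc⟩
    have hc2 : c < 2 := by nlinarith
    interval_cases c
    · left
      have hv : x.val = 0 := by omega
      rw [← hx, hv]; simp
    · right
      have hv : x.val = n := by omega
      rw [← hx, hv]
  · rintro (rfl | rfl)
    · ring
    · rw [two_mul]; exact twoN h2n hn0

end Half


section Keys
variable [NeZero m] (gh g : ZMod m → ℂ)

lemma KEY1 (Hinv : ∀ t : ZMod m, gh t = ∑ s : ZMod m, ee m (-(t*s)) * g s) (a b : ZMod m) :
    ∑ t : ZMod m, ee m (a*t) * (gh t * gh (t + b))
      = (m:ℂ) * (ee m (-(a*b)) * ∑ k : ZMod m, ee m (b*k) * (g k * g (a - k))) := by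
  have step1 : ∀ t : ZMod m, ee m (a*t) * (gh t * gh (t+b))
      = ∑ k : ZMod m, ∑ l : ZMod m, (g k * g l * ee m (-(b*l))) * ee m (t*(a-k-l)) := by
    intro t
    rw [Hinv t, Hinv (t+b), Finset.sum_mul_sum, Finset.mul_sum]
    refine Finset.sum_congr rfl fun k _ => ?_
    rw [Finset.mul_sum]
    refine Finset.sum_congr rfl fun l _ => ?_
    have h1 : ee m (a*t) * (ee m (-(t*k)) * ee m (-((t+b)*l)))
        = ee m (t*(a-k-l)) * ee m (-(b*l)) := by
      rw [← ee_add, ← ee_add, ← ee_add]; congr 1; ring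
    linear_combination (g k * g l) * h1
  calc ∑ t : ZMod m, ee m (a*t) * (gh t * gh (t+b))
      = ∑ t : ZMod m, ∑ k : ZMod m, ∑ l : ZMod m,
          (g k * g l * ee m (-(b*l))) * ee m (t*(a-k-l)) :=
        Finset.sum_congr rfl fun t _ => step1 t
    _ = ∑ k : ZMod m, ∑ l : ZMod m, ∑ t : ZMod m,
          (g k * g l * ee m (-(b*l))) * ee m (t*(a-k-l)) := by
        rw [Finset.sum_comm]
        exact Finset.sum_congr rfl fun k _ => Finset.sum_comm
    _ = ∑ k : ZMod m, ∑ l : ZMod m,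
          (g k * g l * ee m (-(b*l))) * ∑ t : ZMod m, ee m (t*(a-k-l)) := by
        simp_rw [Finset.mul_sum]
    _ = ∑ k : ZMod m, ∑ l : ZMod m,
          (g k * g l * ee m (-(b*l))) * (if a-k-l = 0 then (m:ℂ) else 0) := by
        simp_rw [sum_ee]
    _ = ∑ k : ZMod m, (g k * g (a-k) * ee m (-(b*(a-k)))) * m := by
        refine Finset.sum_congr rfl fun k _ => ?_
        simp_rw [sub_eq_zero, mul_ite, mul_zero]
        rw [Finset.sum_ite_eq]
        simp
    _ = (m:ℂ) * (ee m (-(a*b)) * ∑ k : ZMod m, ee m (b*k) * (g k * g (a - k))) := by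
        rw [Finset.mul_sum, Finset.mul_sum]
        refine Finset.sum_congr rfl fun k _ => ?_
        have h2 : ee m (-(b*(a-k))) = ee m (-(a*b)) * ee m (b*k) := by
          rw [← ee_add]; congr 1; ring
        linear_combination (m : ℂ) * g k * g (a-k) * h2

lemma KEY2 (Hinv : ∀ t : ZMod m, gh t = ∑ s : ZMod m, ee m (-(t*s)) * g s) (a c : ZMod m) :
    ∑ t : ZMod m, ee m (a*t) * (gh t * gh (c - t))
      = (m:ℂ) * ∑ l : ZMod m, ee m (-(c*l)) * (g (a + l) * g l) := by
  have step1 : ∀ t : ZMod m, ee m (a*t) * (gh t * gh (c-t))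
      = ∑ k : ZMod m, ∑ l : ZMod m, (g k * g l * ee m (-(c*l))) * ee m (t*((a+l)-k)) := by
    intro t
    rw [Hinv t, Hinv (c-t), Finset.sum_mul_sum, Finset.mul_sum]
    refine Finset.sum_congr rfl fun k _ => ?_
    rw [Finset.mul_sum]
    refine Finset.sum_congr rfl fun l _ => ?_
    have h1 : ee m (a*t) * (ee m (-(t*k)) * ee m (-((c-t)*l)))
        = ee m (t*((a+l)-k)) * ee m (-(c*l)) := by
      rw [← ee_add, ← ee_add, ← ee_add]; congr 1; ring
    linear_combination (g k * g l) * h1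
  calc ∑ t : ZMod m, ee m (a*t) * (gh t * gh (c-t))
      = ∑ t : ZMod m, ∑ k : ZMod m, ∑ l : ZMod m,
          (g k * g l * ee m (-(c*l))) * ee m (t*((a+l)-k)) :=
        Finset.sum_congr rfl fun t _ => step1 t
    _ = ∑ k : ZMod m, ∑ l : ZMod m, ∑ t : ZMod m,
          (g k * g l * ee m (-(c*l))) * ee m (t*((a+l)-k)) := by
        rw [Finset.sum_comm]
        exact Finset.sum_congr rfl fun k _ => Finset.sum_comm
    _ = ∑ k : ZMod m, ∑ l : ZMod m,
          (g k * g l * ee m (-(c*l))) * (if (a+l)-k = 0 then (m:ℂ) else 0) := by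
        simp_rw [← Finset.mul_sum, sum_ee]
    _ = ∑ l : ZMod m, ∑ k : ZMod m,
          (g k * g l * ee m (-(c*l))) * (if (a+l)-k = 0 then (m:ℂ) else 0) :=
        Finset.sum_comm
    _ = ∑ l : ZMod m, (g (a+l) * g l * ee m (-(c*l))) * m := by
        refine Finset.sum_congr rfl fun l _ => ?_
        simp_rw [sub_eq_zero, mul_ite, mul_zero]
        rw [Finset.sum_ite_eq]
        simp
    _ = (m:ℂ) * ∑ l : ZMod m, ee m (-(c*l)) * (g (a + l) * g l) := by
        rw [Finset.mul_sum]
        exact Finset.sum_congr rfl fun l _ => by ring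

end Keys


section More
variable {n : ℕ}

lemma ee_ne_zero [NeZero m] (x : ZMod m) : ee m x ≠ 0 := by
  have : ζm m ≠ 0 := Complex.exp_ne_zero _
  exact pow_ne_zero _ this

lemma mC_ne_zero [NeZero m] : (m : ℂ) ≠ 0 :=
  Nat.cast_ne_zero.mpr (NeZero.ne m)

lemma invA [NeZero m] (gh g : ZMod m → ℂ)
    (Hg : ∀ s : ZMod m, (m:ℂ) * g s = ∑ t : ZMod m, ee m (s*t) * gh t) :
    ∀ t : ZMod m, gh t = ∑ s : ZMod m, ee m (-(t*s)) * g s := by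
  intro t
  apply mul_left_cancel₀ (mC_ne_zero (m := m))
  calc (m:ℂ) * gh t
      = ∑ u : ZMod m, gh u * (if u - t = 0 then (m:ℂ) else 0) := by
        rw [Finset.sum_eq_single t]
        · simp [mul_comm]
        · intro u _ hu
          rw [if_neg (by simpa [sub_eq_zero] using hu), mul_zero]
        · intro h; exact absurd (Finset.mem_univ t) h
    _ = ∑ u : ZMod m, gh u * ∑ s : ZMod m, ee m (s * (u - t)) := by
        simp_rw [sum_ee]
    _ = ∑ u : ZMod m, ∑ s : ZMod m, ee m (-(t*s)) * (ee m (s*u) * gh u) := by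
        refine Finset.sum_congr rfl fun u _ => ?_
        rw [Finset.mul_sum]
        refine Finset.sum_congr rfl fun s _ => ?_
        have h1 : ee m (s*(u-t)) = ee m (-(t*s)) * ee m (s*u) := by
          rw [← ee_add]; congr 1; ring
        linear_combination gh u * h1
    _ = ∑ s : ZMod m, ee m (-(t*s)) * ∑ u : ZMod m, ee m (s*u) * gh u := by
        rw [Finset.sum_comm]
        exact Finset.sum_congr rfl fun s _ => by rw [Finset.mul_sum]
    _ = ∑ s : ZMod m, ee m (-(t*s)) * ((m:ℂ) * g s) := by
        simp_rw [Hg]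
    _ = (m:ℂ) * ∑ s : ZMod m, ee m (-(t*s)) * g s := by
        rw [Finset.mul_sum]
        exact Finset.sum_congr rfl fun s _ => by ring

lemma invB [NeZero m] (gh g : ZMod m → ℂ)
    (Hinv : ∀ t : ZMod m, gh t = ∑ s : ZMod m, ee m (-(t*s)) * g s) :
    ∀ s : ZMod m, (m:ℂ) * g s = ∑ t : ZMod m, ee m (s*t) * gh t := by
  intro s
  calc (m:ℂ) * g s
      = ∑ u : ZMod m, g u * (if s - u = 0 then (m:ℂ) else 0) := by
        rw [Finset.sum_eq_single s]
        · simp [mul_comm]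
        · intro u _ hu
          rw [if_neg (by simpa [sub_eq_zero, eq_comm] using hu), mul_zero]
        · intro h; exact absurd (Finset.mem_univ s) h
    _ = ∑ u : ZMod m, g u * ∑ t : ZMod m, ee m (t * (s - u)) := by
        simp_rw [sum_ee]
    _ = ∑ u : ZMod m, ∑ t : ZMod m, ee m (s*t) * (ee m (-(t*u)) * g u) := by
        refine Finset.sum_congr rfl fun u _ => ?_
        rw [Finset.mul_sum]
        refine Finset.sum_congr rfl fun t _ => ?_
        have h1 : ee m (t*(s-u)) = ee m (s*t) * ee m (-(t*u)) := by
          rw [← ee_add]; congr 1; ring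
        linear_combination g u * h1
    _ = ∑ t : ZMod m, ee m (s*t) * ∑ u : ZMod m, ee m (-(t*u)) * g u := by
        rw [Finset.sum_comm]
        exact Finset.sum_congr rfl fun t _ => by rw [Finset.mul_sum]
    _ = ∑ t : ZMod m, ee m (s*t) * gh t := by
        simp_rw [← Hinv]

variable (h2n : m = 2 * n) (hn0 : 0 < n) [NeZero m]
include h2n hn0

lemma neg_nmul (x : ZMod m) : -((n : ZMod m) * x) = (n : ZMod m) * x := by
  have h : (n : ZMod m) * x + (n : ZMod m) * x = 0 := by
    linear_combination x * twoN h2n hn0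
  linear_combination -h

lemma ee_nmul_sq (x : ZMod m) :
    ee m ((n : ZMod m) * x) * ee m ((n : ZMod m) * x) = 1 := by
  haveI := instNZ h2n hn0
  rw [← ee_add]
  have h : (n : ZMod m) * x + (n : ZMod m) * x = 0 := by
    linear_combination x * twoN h2n hn0
  rw [h, ee_zero]

lemma sum_pair (F : ZMod m → ℂ) (y : ZMod m) :
    ∑ u : ZMod m, F u * (if 2*(u - y) = 0 then (m:ℂ) else 0)
      = (m:ℂ) * (F y + F (y + (n : ZMod m))) := by
  haveI := instNZ h2n hn0
  have hNe : y ≠ y + (n : ZMod m) := by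
    intro h
    exact N_ne_zero h2n hn0 (by linear_combination -h)
  have hterm : ∀ u : ZMod m, F u * (if 2*(u - y) = 0 then (m:ℂ) else 0)
      = (if u = y then F u * m else 0) + (if u = y + (n:ZMod m) then F u * m else 0) := by
    intro u
    have hcond : 2*(u-y) = 0 ↔ (u = y ∨ u = y + (n:ZMod m)) := by
      rw [two_mul_eq_zero_iff h2n hn0, sub_eq_zero, sub_eq_iff_eq_add]
      exact or_congr Iff.rfl (by rw [add_comm])
    by_cases h1 : u = y
    · subst h1
      rw [if_pos (hcond.mpr (Or.inl rfl)), if_pos rfl, if_neg hNe]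
      ring
    · by_cases h2 : u = y + (n:ZMod m)
      · subst h2
        rw [if_pos (hcond.mpr (Or.inr rfl)), if_neg h1, if_pos rfl]
        ring
      · rw [if_neg (fun h => by rcases hcond.mp h with h|h; exacts [h1 h, h2 h]),
          if_neg h1, if_neg h2]
        ring
  rw [Finset.sum_congr rfl fun u _ => hterm u, Finset.sum_add_distrib,
    Finset.sum_ite_eq', Finset.sum_ite_eq']
  simp
  ring

lemma TODD (g : ZMod m → ℂ) (j : ZMod m) :
    ∑ k : ZMod m, ee m ((n:ZMod m)*k) * (g k * g (j-k))
      = ee m ((n:ZMod m)*j) * ∑ k : ZMod m, ee m ((n:ZMod m)*k) * (g k * g (j-k)) := by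
  haveI := instNZ h2n hn0
  conv_lhs =>
    rw [show (∑ k : ZMod m, ee m ((n:ZMod m)*k) * (g k * g (j-k)))
        = ∑ k : ZMod m, ee m ((n:ZMod m)*(j-k)) * (g (j-k) * g k) from
      Fintype.sum_equiv (Equiv.subLeft j) _ _ (fun k => by simp)]
  rw [Finset.mul_sum]
  refine Finset.sum_congr rfl fun k _ => ?_
  have h1 : ee m ((n:ZMod m)*(j-k)) = ee m ((n:ZMod m)*j) * ee m ((n:ZMod m)*k) := by
    rw [← ee_add]
    congr 1
    have := neg_nmul h2n hn0 k
    linear_combination this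
  linear_combination (g (j-k) * g k) * h1

lemma FACT (gh g : ZMod m → ℂ)
    (Hinv : ∀ t : ZMod m, gh t = ∑ s : ZMod m, ee m (-(t*s)) * g s) (s : ZMod m) :
    ∑ j : ZMod m, (ee m (-(s*j)) * ee m ((n:ZMod m)*j))
        * ∑ k : ZMod m, ee m ((n:ZMod m)*k) * (g k * g (j - k))
      = gh s * gh (s + (n:ZMod m)) := by
  haveI := instNZ h2n hn0
  calc ∑ j : ZMod m, (ee m (-(s*j)) * ee m ((n:ZMod m)*j))
        * ∑ k : ZMod m, ee m ((n:ZMod m)*k) * (g k * g (j - k))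
      = ∑ j : ZMod m, ∑ k : ZMod m, (ee m (-(s*j)) * ee m ((n:ZMod m)*j))
          * (ee m ((n:ZMod m)*k) * (g k * g (j - k))) := by
        simp_rw [Finset.mul_sum]
    _ = ∑ k : ZMod m, ∑ j : ZMod m, (ee m (-(s*j)) * ee m ((n:ZMod m)*j))
          * (ee m ((n:ZMod m)*k) * (g k * g (j - k))) := Finset.sum_comm
    _ = ∑ k : ZMod m, ∑ u : ZMod m, (ee m (-(s*k)) * g k) * ((ee m (-((s+(n:ZMod m))*u))) * g u) := by
        refine Finset.sum_congr rfl fun k _ => ?_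
        refine (Fintype.sum_equiv (Equiv.addLeft k) _ _ (fun u => ?_)).symm
        have harg : ee m (-(s*(k+u))) * ee m ((n:ZMod m)*(k+u)) * ee m ((n:ZMod m)*k)
            = ee m (-(s*k)) * ee m (-((s+(n:ZMod m))*u)) := by
          rw [← ee_add, ← ee_add, ← ee_add]
          congr 1
          linear_combination (k+u) * twoN h2n hn0
        have hsimp : k + u - k = u := by ring
        rw [Equiv.coe_addLeft, hsimp]
        linear_combination (-(g k * g u)) * harg
    _ = (∑ k : ZMod m, ee m (-(s*k)) * g k)
          * (∑ u : ZMod m, ee m (-((s+(n:ZMod m))*u)) * g u) := by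
        rw [Finset.sum_mul_sum]
    _ = gh s * gh (s + (n:ZMod m)) := by rw [← Hinv, ← Hinv]

end More


section Core
variable {n : ℕ} (h2n : m = 2 * n) (hn0 : 0 < n) [NeZero m] (θ : ℕ) (gh g : ZMod m → ℂ)
include h2n hn0

lemma hC1 (Hinv : ∀ t : ZMod m, gh t = ∑ s : ZMod m, ee m (-(t*s)) * g s) (d : ZMod m) :
    ∑ t : ZMod m, gh t * gh (t+d)
      = (m:ℂ) * ∑ k : ZMod m, ee m (d*k) * (g k * g (-k)) := by
  have h := KEY1 gh g Hinv 0 d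
  simpa [ee_zero, zero_sub] using h

lemma A_to_B2
    (Hinv : ∀ t : ZMod m, gh t = ∑ s : ZMod m, ee m (-(t*s)) * g s)
    (HA1 : ∀ x : ZMod m, (m:ℂ)^2 * (gh x * gh (x + (n:ZMod m)))
      = (∑ t : ZMod m, gh t)^2 + (m:ℂ)^2*((m:ℂ)-1))
    (HA2 : ∀ d : ZMod m, d ≠ (n:ZMod m) → (m:ℂ) * (∑ t : ZMod m, gh t * gh (t + d))
      = (∑ t : ZMod m, gh t)^2 - (m:ℂ)^2) :
    ∀ x : ZMod m, x ≠ 0 → g x * g (-x) = ee m ((n:ZMod m)*x) := by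
  intro x hx
  set Sg := ∑ t : ZMod m, gh t with hSg
  have hm0 : (m:ℂ) ≠ 0 := mC_ne_zero
  have hcd : ∀ d : ZMod m, (m:ℂ) * (∑ t : ZMod m, gh t * gh (t+d))
      = (Sg^2 - (m:ℂ)^2) + (if d = (n:ZMod m) then (m:ℂ)^3 else 0) := by
    intro d
    by_cases hd : d = (n:ZMod m)
    · subst hd
      rw [if_pos rfl]
      apply mul_left_cancel₀ hm0
      have h1 : ∑ t : ZMod m, (m:ℂ)^2 * (gh t * gh (t+(n:ZMod m)))
          = (m:ℂ) * (Sg^2 + (m:ℂ)^2*((m:ℂ)-1)) := by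
        rw [Finset.sum_congr rfl fun t _ => HA1 t, Finset.sum_const, Finset.card_univ,
          ZMod.card, nsmul_eq_mul]
      calc (m:ℂ) * ((m:ℂ) * ∑ t : ZMod m, gh t * gh (t+(n:ZMod m)))
          = ∑ t : ZMod m, (m:ℂ)^2 * (gh t * gh (t+(n:ZMod m))) := by
            rw [Finset.mul_sum, Finset.mul_sum]
            exact Finset.sum_congr rfl fun t _ => by ring
        _ = (m:ℂ) * (Sg^2 + (m:ℂ)^2*((m:ℂ)-1)) := h1
        _ = (m:ℂ) * ((Sg^2 - (m:ℂ)^2) + (m:ℂ)^3) := by ring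
    · rw [if_neg hd, HA2 d hd, add_zero]
  have key : ∑ d : ZMod m, ee m (d * (-x)) * ((m:ℂ) * (∑ t : ZMod m, gh t * gh (t+d)))
      = (m:ℂ)^3 * (g x * g (-x)) := by
    calc ∑ d : ZMod m, ee m (d * (-x)) * ((m:ℂ) * (∑ t : ZMod m, gh t * gh (t+d)))
        = ∑ d : ZMod m, ∑ k : ZMod m,
            ((m:ℂ)^2 * (g k * g (-k))) * ee m (d*(k-x)) := by
          refine Finset.sum_congr rfl fun d _ => ?_
          rw [hC1 h2n hn0 gh g Hinv d, Finset.mul_sum, Finset.mul_sum, Finset.mul_sum]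
          refine Finset.sum_congr rfl fun k _ => ?_
          have h1 : ee m (d*(-x)) * ee m (d*k) = ee m (d*(k-x)) := by
            rw [← ee_add]; congr 1; ring
          linear_combination ((m:ℂ)^2 * (g k * g (-k))) * h1
      _ = ∑ k : ZMod m, ∑ d : ZMod m,
            ((m:ℂ)^2 * (g k * g (-k))) * ee m (d*(k-x)) := Finset.sum_comm
      _ = ∑ k : ZMod m, ((m:ℂ)^2 * (g k * g (-k))) * (if k-x = 0 then (m:ℂ) else 0) := by
          simp_rw [← Finset.mul_sum, sum_ee]
      _ = (m:ℂ)^3 * (g x * g (-x)) := by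
          simp_rw [sub_eq_zero, mul_ite, mul_zero]
          rw [Finset.sum_ite_eq']
          simp
          ring
  have key2 : ∑ d : ZMod m, ee m (d * (-x))
        * ((Sg^2 - (m:ℂ)^2) + (if d = (n:ZMod m) then (m:ℂ)^3 else 0))
      = ee m ((n:ZMod m)*x) * (m:ℂ)^3 := by
    simp_rw [mul_add, Finset.sum_add_distrib]
    have h1 : ∑ d : ZMod m, ee m (d*(-x)) * (Sg^2 - (m:ℂ)^2) = 0 := by
      rw [← Finset.sum_mul, sum_ee, if_neg (neg_ne_zero.mpr hx), zero_mul]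
    have h2 : ∑ d : ZMod m, ee m (d*(-x)) * (if d = (n:ZMod m) then (m:ℂ)^3 else 0)
        = ee m ((n:ZMod m)*x) * (m:ℂ)^3 := by
      simp_rw [mul_ite, mul_zero]
      rw [Finset.sum_ite_eq']
      simp only [Finset.mem_univ, if_true]
      rw [show (n:ZMod m) * -x = -((n:ZMod m)*x) by ring, neg_nmul h2n hn0]
    rw [h1, h2, zero_add]
  have h3 : (m:ℂ)^3 * (g x * g (-x)) = ee m ((n:ZMod m)*x) * (m:ℂ)^3 := by
    rw [← key, ← key2]
    exact Finset.sum_congr rfl fun d _ => by rw [hcd d]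
  have hm3 : (m:ℂ)^3 ≠ 0 := pow_ne_zero _ hm0
  apply mul_right_cancel₀ hm3
  linear_combination h3


lemma sum_pair' (F : ZMod m → ℂ) (y : ZMod m) :
    ∑ u : ZMod m, F u * (if 2*(y - u) = 0 then (m:ℂ) else 0)
      = (m:ℂ) * (F y + F (y + (n : ZMod m))) := by
  rw [← sum_pair h2n hn0 F y]
  refine Finset.sum_congr rfl fun u _ => ?_
  congr 1
  refine if_congr ?_ rfl rfl
  constructor <;> intro h <;> linear_combination -h

lemma A_to_B1
    (Hinv : ∀ t : ZMod m, gh t = ∑ s : ZMod m, ee m (-(t*s)) * g s)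
    (HA1 : ∀ x : ZMod m, (m:ℂ)^2 * (gh x * gh (x + (n:ZMod m)))
      = (∑ t : ZMod m, gh t)^2 + (m:ℂ)^2*((m:ℂ)-1)) :
    ∀ x : ZMod m, 2*x ≠ 0 →
      ∑ k : ZMod m, ee m ((n:ZMod m)*k) * (g k * g (2*x - k)) = 0 := by
  intro x hx
  set Sg := ∑ t : ZMod m, gh t with hSg
  have hk := KEY1 gh g Hinv (2*x) (n:ZMod m)
  have hzero : (m:ℂ)^2 * (∑ t : ZMod m, ee m ((2*x)*t) * (gh t * gh (t+(n:ZMod m)))) = 0 := by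
    rw [Finset.mul_sum]
    calc ∑ t : ZMod m, (m:ℂ)^2 * (ee m ((2*x)*t) * (gh t * gh (t+(n:ZMod m))))
        = ∑ t : ZMod m, (Sg^2 + (m:ℂ)^2*((m:ℂ)-1)) * ee m (t*(2*x)) := by
          refine Finset.sum_congr rfl fun t _ => ?_
          have h1 : ee m ((2*x)*t) = ee m (t*(2*x)) := by rw [mul_comm]
          rw [h1]
          linear_combination ee m (t*(2*x)) * HA1 t
      _ = (Sg^2 + (m:ℂ)^2*((m:ℂ)-1)) * ∑ t : ZMod m, ee m (t*(2*x)) := by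
          rw [Finset.mul_sum]
      _ = 0 := by rw [sum_ee, if_neg hx, mul_zero]
  rw [hk] at hzero
  have hm0 : (m:ℂ) ≠ 0 := mC_ne_zero
  have he : ee m (-((2*x)*(n:ZMod m))) ≠ 0 := ee_ne_zero _
  rcases mul_eq_zero.mp hzero with h | h
  · exact absurd h (pow_ne_zero _ hm0)
  · rcases mul_eq_zero.mp h with h' | h'
    · exact absurd h' hm0
    · rcases mul_eq_zero.mp h' with h'' | h''
      · exact absurd h'' he
      · exact h''

lemma A_to_B3
    (Hg : ∀ s : ZMod m, (m:ℂ) * g s = ∑ t : ZMod m, ee m (s*t) * gh t)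
    (Hinv : ∀ t : ZMod m, gh t = ∑ s : ZMod m, ee m (-(t*s)) * g s)
    (HA3 : ∀ x : ZMod m,
      (∑ t : ZMod m, ee m ((n:ZMod m)*t) * (gh t * gh ((2*x - 2*(θ:ZMod m)) - t)))
        = (gh x + gh (x + (n:ZMod m))) * ∑ t : ZMod m, ee m ((n:ZMod m)*t) * gh t) :
    ∀ u : ZMod m, ee m (2*(θ:ZMod m)*u) * (g u * g (u+(n:ZMod m)))
      = g (2*u) * g (n:ZMod m) := by
  intro u
  have hm0 : (m:ℂ) ≠ 0 := mC_ne_zero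
  have hL : ∑ x : ZMod m, ee m ((2*u)*x)
        * (∑ t : ZMod m, ee m ((n:ZMod m)*t) * (gh t * gh ((2*x - 2*(θ:ZMod m)) - t)))
      = 2*(m:ℂ)^2 * (ee m (2*(θ:ZMod m)*u) * (g u * g (u+(n:ZMod m)))) := by
    calc ∑ x : ZMod m, ee m ((2*u)*x)
          * (∑ t : ZMod m, ee m ((n:ZMod m)*t) * (gh t * gh ((2*x - 2*(θ:ZMod m)) - t)))
        = ∑ x : ZMod m, ∑ l : ZMod m,
            ((m:ℂ) * (ee m (2*(θ:ZMod m)*l) * (g ((n:ZMod m)+l) * g l))) * ee m (x*(2*(u-l))) := by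
          refine Finset.sum_congr rfl fun x _ => ?_
          rw [KEY2 gh g Hinv (n:ZMod m) (2*x - 2*(θ:ZMod m)), Finset.mul_sum, Finset.mul_sum]
          refine Finset.sum_congr rfl fun l _ => ?_
          have h1 : ee m ((2*u)*x) * ee m (-((2*x - 2*(θ:ZMod m))*l))
              = ee m (x*(2*(u-l))) * ee m (2*(θ:ZMod m)*l) := by
            rw [← ee_add, ← ee_add]; congr 1; ring
          linear_combination ((m:ℂ) * (g ((n:ZMod m)+l) * g l)) * h1
      _ = ∑ l : ZMod m, ∑ x : ZMod m,
            ((m:ℂ) * (ee m (2*(θ:ZMod m)*l) * (g ((n:ZMod m)+l) * g l))) * ee m (x*(2*(u-l))) :=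
          Finset.sum_comm
      _ = ∑ l : ZMod m,
            ((m:ℂ) * (ee m (2*(θ:ZMod m)*l) * (g ((n:ZMod m)+l) * g l)))
              * (if 2*(u-l) = 0 then (m:ℂ) else 0) := by
          simp_rw [← Finset.mul_sum, sum_ee]
      _ = (m:ℂ) * (((m:ℂ) * (ee m (2*(θ:ZMod m)*u) * (g ((n:ZMod m)+u) * g u)))
            + ((m:ℂ) * (ee m (2*(θ:ZMod m)*(u+(n:ZMod m)))
              * (g ((n:ZMod m)+(u+(n:ZMod m))) * g (u+(n:ZMod m)))))) :=
          sum_pair' h2n hn0 _ u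
      _ = 2*(m:ℂ)^2 * (ee m (2*(θ:ZMod m)*u) * (g u * g (u+(n:ZMod m)))) := by
          have e1 : 2*(θ:ZMod m)*(u+(n:ZMod m)) = 2*(θ:ZMod m)*u := by
            linear_combination (θ:ZMod m) * twoN h2n hn0
          have e2 : (n:ZMod m)+(u+(n:ZMod m)) = u := by
            linear_combination twoN h2n hn0
          rw [e1, e2, add_comm (n:ZMod m) u]
          ring
  have hR : ∑ x : ZMod m, ee m ((2*u)*x)
        * ((gh x + gh (x + (n:ZMod m))) * ∑ t : ZMod m, ee m ((n:ZMod m)*t) * gh t)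
      = 2*(m:ℂ)^2 * (g (2*u) * g (n:ZMod m)) := by
    have hB : ∑ x : ZMod m, ee m ((2*u)*x) * gh (x+(n:ZMod m)) = (m:ℂ) * g (2*u) := by
      have step : ∑ x : ZMod m, ee m ((2*u)*x) * gh (x+(n:ZMod m))
          = ∑ y : ZMod m, ee m ((2*u)*(y-(n:ZMod m))) * gh y := by
        refine Fintype.sum_equiv (Equiv.addRight (n:ZMod m)) _ _ (fun x => ?_)
        simp only [Equiv.coe_addRight, add_sub_cancel_right]
      rw [step]
      have step2 : ∀ y : ZMod m, (2*u)*(y-(n:ZMod m)) = (2*u)*y := by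
        intro y
        linear_combination (-u) * twoN h2n hn0
      simp_rw [step2]
      exact (Hg (2*u)).symm
    calc ∑ x : ZMod m, ee m ((2*u)*x)
          * ((gh x + gh (x + (n:ZMod m))) * ∑ t : ZMod m, ee m ((n:ZMod m)*t) * gh t)
        = (∑ x : ZMod m, ee m ((2*u)*x) * gh x + ∑ x : ZMod m, ee m ((2*u)*x) * gh (x+(n:ZMod m)))
            * ∑ t : ZMod m, ee m ((n:ZMod m)*t) * gh t := by
          rw [← Finset.sum_add_distrib, Finset.sum_mul]
          exact Finset.sum_congr rfl fun x _ => by ring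
      _ = ((m:ℂ) * g (2*u) + (m:ℂ) * g (2*u)) * ((m:ℂ) * g (n:ZMod m)) := by
          rw [← Hg (2*u), hB, ← Hg (n:ZMod m)]
      _ = 2*(m:ℂ)^2 * (g (2*u) * g (n:ZMod m)) := by ring
  have heq : (2*(m:ℂ)^2) * (ee m (2*(θ:ZMod m)*u) * (g u * g (u+(n:ZMod m))))
      = (2*(m:ℂ)^2) * (g (2*u) * g (n:ZMod m)) := by
    rw [← hL, ← hR]
    exact Finset.sum_congr rfl fun x _ => by rw [HA3 x]
  have h2m : (2*(m:ℂ)^2) ≠ 0 := by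
    simp [mC_ne_zero (m := m)]
  exact mul_left_cancel₀ h2m heq


lemma hT_zero (g : ZMod m → ℂ)
    (HB1 : ∀ x : ZMod m, 2*x ≠ 0 →
      ∑ k : ZMod m, ee m ((n:ZMod m)*k) * (g k * g (2*x - k)) = 0) :
    ∀ j : ZMod m, j ≠ 0 →
      ∑ k : ZMod m, ee m ((n:ZMod m)*k) * (g k * g (j - k)) = 0 := by
  intro j hj
  by_cases hpar : ∃ x : ZMod m, j = 2*x
  · obtain ⟨x, rfl⟩ := hpar
    exact HB1 x hj
  · have hodd : ee m ((n:ZMod m)*j) = -1 := by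
      rw [ee_nmul h2n hn0 j]
      rcases Nat.even_or_odd j.val with he | ho
      · exfalso
        apply hpar
        obtain ⟨c, hc⟩ := he
        refine ⟨((c : ℕ) : ZMod m), ?_⟩
        have hx : ((j.val : ℕ) : ZMod m) = j := by rw [ZMod.natCast_val, ZMod.cast_id]
        rw [← hx, hc]
        push_cast
        ring
      · exact Odd.neg_one_pow ho
    have hodd2 := TODD h2n hn0 g j
    rw [hodd] at hodd2
    have h2T : (∑ k : ZMod m, ee m ((n:ZMod m)*k) * (g k * g (j - k)))
        + (∑ k : ZMod m, ee m ((n:ZMod m)*k) * (g k * g (j - k))) = 0 := by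
      linear_combination hodd2
    linear_combination h2T / 2

lemma B_to_A1
    (Hg : ∀ s : ZMod m, (m:ℂ) * g s = ∑ t : ZMod m, ee m (s*t) * gh t)
    (Hinv : ∀ t : ZMod m, gh t = ∑ s : ZMod m, ee m (-(t*s)) * g s)
    (HB1 : ∀ x : ZMod m, 2*x ≠ 0 →
      ∑ k : ZMod m, ee m ((n:ZMod m)*k) * (g k * g (2*x - k)) = 0)
    (HB2 : ∀ x : ZMod m, x ≠ 0 → g x * g (-x) = ee m ((n:ZMod m)*x)) :
    ∀ x : ZMod m, (m:ℂ)^2 * (gh x * gh (x + (n:ZMod m)))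
      = (∑ t : ZMod m, gh t)^2 + (m:ℂ)^2*((m:ℂ)-1) := by
  intro x
  have hm2 : (2:ℕ) ≤ m := by omega
  have hT := hT_zero h2n hn0 g HB1
  have hT0 : ∑ k : ZMod m, ee m ((n:ZMod m)*k) * (g k * g ((0:ZMod m) - k))
      = g 0 * g 0 + ((m:ℂ)-1) := by
    simp_rw [zero_sub]
    rw [← Finset.add_sum_erase _ _ (Finset.mem_univ (0:ZMod m))]
    congr 1
    · simp [ee_zero]
    · calc ∑ k ∈ Finset.univ.erase (0:ZMod m), ee m ((n:ZMod m)*k) * (g k * g (-k))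
          = ∑ k ∈ Finset.univ.erase (0:ZMod m), (1:ℂ) := by
            refine Finset.sum_congr rfl fun k hk => ?_
            rw [HB2 k (Finset.mem_erase.mp hk).1]
            exact ee_nmul_sq h2n hn0 k
        _ = ((m:ℂ)-1) := by
            rw [Finset.sum_const, Finset.card_erase_of_mem (Finset.mem_univ _),
              Finset.card_univ, ZMod.card, nsmul_eq_mul, mul_one]
            push_cast [Nat.cast_sub (by omega : 1 ≤ m)]
            ring
  have hfact := FACT h2n hn0 gh g Hinv x
  have hmain : gh x * gh (x + (n:ZMod m)) = g 0 * g 0 + ((m:ℂ)-1) := by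
    rw [← hfact, ← hT0]
    rw [Finset.sum_eq_single (0:ZMod m)]
    · simp [ee_zero]
    · intro j _ hj
      rw [hT j hj, mul_zero]
    · intro h; exact absurd (Finset.mem_univ _) h
  have hSg : ∑ t : ZMod m, gh t = (m:ℂ) * g 0 := by
    rw [Hg 0]
    exact Finset.sum_congr rfl fun t _ => by simp [ee_zero]
  rw [hmain, hSg]
  ring

lemma B_to_A2
    (Hg : ∀ s : ZMod m, (m:ℂ) * g s = ∑ t : ZMod m, ee m (s*t) * gh t)
    (Hinv : ∀ t : ZMod m, gh t = ∑ s : ZMod m, ee m (-(t*s)) * g s)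
    (HB2 : ∀ x : ZMod m, x ≠ 0 → g x * g (-x) = ee m ((n:ZMod m)*x)) :
    ∀ d : ZMod m, d ≠ (n:ZMod m) → (m:ℂ) * (∑ t : ZMod m, gh t * gh (t + d))
      = (∑ t : ZMod m, gh t)^2 - (m:ℂ)^2 := by
  intro d hd
  have hNN : -((n:ZMod m)) = (n:ZMod m) := by
    have := neg_nmul h2n hn0 1
    simpa using this
  have hdN : d + (n:ZMod m) ≠ 0 := by
    intro h
    apply hd
    have : d = -((n:ZMod m)) := by linear_combination h
    rwa [hNN] at this
  have hsum : ∑ k : ZMod m, ee m (d*k) * (g k * g (-k)) = g 0 * g 0 - 1 := by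
    rw [← Finset.add_sum_erase _ _ (Finset.mem_univ (0:ZMod m))]
    have h1 : ∑ k ∈ Finset.univ.erase (0:ZMod m), ee m (d*k) * (g k * g (-k))
        = ∑ k ∈ Finset.univ.erase (0:ZMod m), ee m (k*(d+(n:ZMod m))) := by
      refine Finset.sum_congr rfl fun k hk => ?_
      rw [HB2 k (Finset.mem_erase.mp hk).1, ← ee_add]
      congr 1
      ring
    have h2 : ∑ k ∈ Finset.univ.erase (0:ZMod m), ee m (k*(d+(n:ZMod m))) = -1 := by
      have h3 : ∑ k : ZMod m, ee m (k*(d+(n:ZMod m))) = 0 := by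
        rw [sum_ee, if_neg hdN]
      rw [← Finset.add_sum_erase _ _ (Finset.mem_univ (0:ZMod m))] at h3
      simp only [zero_mul, ee_zero] at h3
      linear_combination h3
    rw [h1, h2]
    simp [ee_zero]
    ring
  have hSg : ∑ t : ZMod m, gh t = (m:ℂ) * g 0 := by
    rw [Hg 0]
    exact Finset.sum_congr rfl fun t _ => by simp [ee_zero]
  rw [hC1 h2n hn0 gh g Hinv d, hsum, hSg]
  ring

lemma B_to_A3
    (Hg : ∀ s : ZMod m, (m:ℂ) * g s = ∑ t : ZMod m, ee m (s*t) * gh t)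
    (Hinv : ∀ t : ZMod m, gh t = ∑ s : ZMod m, ee m (-(t*s)) * g s)
    (HB3 : ∀ u : ZMod m, ee m (2*(θ:ZMod m)*u) * (g u * g (u+(n:ZMod m)))
      = g (2*u) * g (n:ZMod m)) :
    ∀ x : ZMod m,
      (∑ t : ZMod m, ee m ((n:ZMod m)*t) * (gh t * gh ((2*x - 2*(θ:ZMod m)) - t)))
        = (gh x + gh (x + (n:ZMod m))) * ∑ t : ZMod m, ee m ((n:ZMod m)*t) * gh t := by
  intro x
  have hm0 : (m:ℂ) ≠ 0 := mC_ne_zero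
  apply mul_left_cancel₀ hm0
  calc (m:ℂ) * ∑ t : ZMod m, ee m ((n:ZMod m)*t) * (gh t * gh ((2*x - 2*(θ:ZMod m)) - t))
      = (m:ℂ) * ((m:ℂ) * ∑ l : ZMod m,
          ee m (-((2*x - 2*(θ:ZMod m))*l)) * (g ((n:ZMod m) + l) * g l)) := by
        rw [KEY2 gh g Hinv (n:ZMod m) (2*x - 2*(θ:ZMod m))]
    _ = g (n:ZMod m) * ∑ l : ZMod m, ee m (-((2*x)*l)) * ((m:ℂ)^2 * g (2*l)) := by
        rw [Finset.mul_sum, Finset.mul_sum, Finset.mul_sum]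
        refine Finset.sum_congr rfl fun l _ => ?_
        have h1 : ee m (-((2*x - 2*(θ:ZMod m))*l)) = ee m (-((2*x)*l)) * ee m (2*(θ:ZMod m)*l) := by
          rw [← ee_add]; congr 1; ring
        have h2 := HB3 l
        rw [add_comm (n:ZMod m) l]
        linear_combination ((m:ℂ)^2 * (g (l+(n:ZMod m)) * g l)) * h1
          + ((m:ℂ)^2 * ee m (-((2*x)*l))) * h2
    _ = g (n:ZMod m) * ∑ l : ZMod m, ∑ t : ZMod m,
          ((m:ℂ) * gh t) * ee m (l*(2*(t-x))) := by
        congr 1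
        refine Finset.sum_congr rfl fun l _ => ?_
        rw [show (m:ℂ)^2 * g (2*l) = (m:ℂ) * ((m:ℂ) * g (2*l)) by ring, Hg (2*l),
          Finset.mul_sum, Finset.mul_sum]
        refine Finset.sum_congr rfl fun t _ => ?_
        have h1 : ee m (-((2*x)*l)) * ee m ((2*l)*t) = ee m (l*(2*(t-x))) := by
          rw [← ee_add]; congr 1; ring
        linear_combination ((m:ℂ) * gh t) * h1
    _ = g (n:ZMod m) * ∑ t : ZMod m,
          ((m:ℂ) * gh t) * (if 2*(t-x) = 0 then (m:ℂ) else 0) := by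
        rw [Finset.sum_comm]
        congr 1
        exact Finset.sum_congr rfl fun t _ => by rw [← Finset.mul_sum, sum_ee]
    _ = g (n:ZMod m) * ((m:ℂ) * (((m:ℂ) * gh x) + ((m:ℂ) * gh (x+(n:ZMod m))))) := by
        rw [sum_pair h2n hn0 (fun t => (m:ℂ) * gh t) x]
    _ = (m:ℂ) * ((gh x + gh (x + (n:ZMod m))) * ((m:ℂ) * g (n:ZMod m))) := by ring
    _ = (m:ℂ) * ((gh x + gh (x + (n:ZMod m))) * ∑ t : ZMod m, ee m ((n:ZMod m)*t) * gh t) := by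
        rw [Hg (n:ZMod m)]


lemma csym (gh : ZMod m → ℂ) (d : ZMod m) :
    ∑ t : ZMod m, gh t * gh (t + d) = ∑ t : ZMod m, gh t * gh (t + -d) := by
  haveI := instNZ h2n hn0
  refine Fintype.sum_equiv (Equiv.addRight d) _ _ (fun t => ?_)
  simp only [Equiv.coe_addRight]
  rw [add_neg_cancel_right]
  ring

lemma hxval (x : ZMod m) : ((x.val : ℕ) : ZMod m) = x := by
  haveI := instNZ h2n hn0
  rw [ZMod.natCast_val, ZMod.cast_id]

lemma ghat_to_A (HG : GhatLevel m θ gh) :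
    (∀ x : ZMod m, (m:ℂ)^2 * (gh x * gh (x + (n:ZMod m)))
        = (∑ t : ZMod m, gh t)^2 + (m:ℂ)^2*((m:ℂ)-1))
    ∧ (∀ d : ZMod m, d ≠ (n:ZMod m) → (m:ℂ) * (∑ t : ZMod m, gh t * gh (t + d))
        = (∑ t : ZMod m, gh t)^2 - (m:ℂ)^2)
    ∧ (∀ x : ZMod m,
        (∑ t : ZMod m, ee m ((n:ZMod m)*t) * (gh t * gh ((2*x - 2*(θ:ZMod m)) - t)))
          = (gh x + gh (x + (n:ZMod m))) * ∑ t : ZMod m, ee m ((n:ZMod m)*t) * gh t) := by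
  haveI := instNZ h2n hn0
  obtain ⟨H1, H2, H3⟩ := HG
  have hdiv : m / 2 = n := by omega
  have hx := hxval h2n hn0
  -- converted versions of H1, H2, H3
  have H1' : ∀ s : ℕ, s ≤ n - 1 →
      (m:ℂ)^2 * (gh (s : ZMod m) * gh ((s:ZMod m) + (n:ZMod m)))
        = (∑ t : ZMod m, gh t)^2 + (m:ℂ)^2*((m:ℂ)-1) := by
    intro s hs
    have h := H1 s (by omega)
    rw [sum_range_eq gh, hdiv] at h
    rw [show ((n + s : ℕ) : ZMod m) = (s:ZMod m) + (n:ZMod m) by push_cast; ring] at h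
    linear_combination h
  have H2' : ∀ s : ℕ, s ≤ n - 1 →
      (m:ℂ) * (∑ t : ZMod m, gh t * gh (t + (s:ZMod m)))
        = (∑ t : ZMod m, gh t)^2 - (m:ℂ)^2 := by
    intro s hs
    have h := H2 s (by omega)
    rw [sum_range_eq gh] at h
    have hconv : ∑ t ∈ Finset.range m, gh (t : ZMod m) * gh ((s + t : ℕ) : ZMod m)
        = ∑ x : ZMod m, gh x * gh (x + (s:ZMod m)) := by
      rw [← sum_range_eq (fun x => gh x * gh (x + (s:ZMod m)))]
      refine Finset.sum_congr rfl fun t _ => ?_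
      congr 2
      push_cast
      ring
    rw [hconv] at h
    exact h
  have H3' : ∀ s : ℕ, s ≤ n - 1 →
      (∑ t : ZMod m, ee m ((n:ZMod m)*t) * (gh t * gh ((2*(s:ZMod m) - 2*(θ:ZMod m)) - t)))
        = (gh (s:ZMod m) + gh ((s:ZMod m) + (n:ZMod m)))
          * ∑ t : ZMod m, ee m ((n:ZMod m)*t) * gh t := by
    intro s hs
    have h := H3 s (by omega)
    have hconvS : ∑ t ∈ Finset.range m, (-1:ℂ)^t * gh (t : ZMod m)
        = ∑ x : ZMod m, ee m ((n:ZMod m)*x) * gh x := by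
      rw [← sum_range_eq (fun x => ee m ((n:ZMod m)*x) * gh x)]
      refine Finset.sum_congr rfl fun t ht => ?_
      rw [ee_nmul h2n hn0, ZMod.val_natCast_of_lt (Finset.mem_range.mp ht)]
    have hconvL : ∑ t ∈ Finset.range m, (-1:ℂ)^t * gh (t : ZMod m)
          * gh ((2*(s:ℤ) - 2*(θ:ℤ) - (t:ℤ) : ℤ) : ZMod m)
        = ∑ x : ZMod m, ee m ((n:ZMod m)*x)
            * (gh x * gh ((2*(s:ZMod m) - 2*(θ:ZMod m)) - x)) := by
      rw [← sum_range_eq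
        (fun x => ee m ((n:ZMod m)*x) * (gh x * gh ((2*(s:ZMod m) - 2*(θ:ZMod m)) - x)))]
      refine Finset.sum_congr rfl fun t ht => ?_
      rw [ee_nmul h2n hn0, ZMod.val_natCast_of_lt (Finset.mem_range.mp ht),
        show (((2*(s:ℤ) - 2*(θ:ℤ) - (t:ℤ) : ℤ)) : ZMod m)
          = (2*(s:ZMod m) - 2*(θ:ZMod m)) - (t:ZMod m) by push_cast; ring]
      ring
    rw [hconvL, hconvS] at h
    rw [show ((m/2 + s : ℕ) : ZMod m) = (s:ZMod m) + (n:ZMod m) by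
      rw [hdiv]; push_cast; ring] at h
    exact h
  refine ⟨?_, ?_, ?_⟩
  · intro x
    by_cases hv : x.val < n
    · have h := H1' x.val (by omega)
      rwa [hx x] at h
    · set s := x.val - n with hsdef
      have hvs : x.val = s + n := by
        have := ZMod.val_lt x
        omega
      have hxs : ((s : ℕ) : ZMod m) = x + (n:ZMod m) := by
        rw [← hx x, hvs]
        push_cast
        linear_combination -(twoN h2n hn0)
      have h := H1' s (by have := ZMod.val_lt x; omega)
      rw [hxs] at h
      rw [show x + (n:ZMod m) + (n:ZMod m) = x by linear_combination twoN h2n hn0] at h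
      linear_combination h
  · intro d hd
    rcases lt_trichotomy d.val n with hv | hv | hv
    · have h := H2' d.val (by omega)
      rwa [hx d] at h
    · exfalso
      apply hd
      rw [← hx d, hv]
    · set s := m - d.val with hsdef
      have hmv : d.val < m := ZMod.val_lt d
      have hxs : ((s : ℕ) : ZMod m) = -d := by
        rw [Nat.cast_sub hmv.le, ZMod.natCast_self, hx d]
        ring
      have h := H2' s (by omega)
      rw [hxs, ← csym h2n hn0 gh d] at h
      exact h
  · intro x
    by_cases hv : x.val < n
    · have h := H3' x.val (by omega)
      rwa [hx x] at h
    · set s := x.val - n with hsdef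
      have hvs : x.val = s + n := by
        have := ZMod.val_lt x
        omega
      have hxs : ((s : ℕ) : ZMod m) = x + (n:ZMod m) := by
        rw [← hx x, hvs]
        push_cast
        linear_combination -(twoN h2n hn0)
      have h := H3' s (by have := ZMod.val_lt x; omega)
      rw [hxs] at h
      rw [show 2*(x + (n:ZMod m)) - 2*(θ:ZMod m) = 2*x - 2*(θ:ZMod m) by
        linear_combination twoN h2n hn0] at h
      rw [show x + (n:ZMod m) + (n:ZMod m) = x by linear_combination twoN h2n hn0] at h
      rw [h]
      ring


lemma A_to_ghat
    (HA1 : ∀ x : ZMod m, (m:ℂ)^2 * (gh x * gh (x + (n:ZMod m)))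
        = (∑ t : ZMod m, gh t)^2 + (m:ℂ)^2*((m:ℂ)-1))
    (HA2 : ∀ d : ZMod m, d ≠ (n:ZMod m) → (m:ℂ) * (∑ t : ZMod m, gh t * gh (t + d))
        = (∑ t : ZMod m, gh t)^2 - (m:ℂ)^2)
    (HA3 : ∀ x : ZMod m,
        (∑ t : ZMod m, ee m ((n:ZMod m)*t) * (gh t * gh ((2*x - 2*(θ:ZMod m)) - t)))
          = (gh x + gh (x + (n:ZMod m))) * ∑ t : ZMod m, ee m ((n:ZMod m)*t) * gh t) :
    GhatLevel m θ gh := by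
  haveI := instNZ h2n hn0
  have hdiv : m / 2 = n := by omega
  refine ⟨?_, ?_, ?_⟩
  · intro s hs
    rw [sum_range_eq gh, hdiv,
      show ((n + s : ℕ) : ZMod m) = (s:ZMod m) + (n:ZMod m) by push_cast; ring]
    linear_combination HA1 ((s : ZMod m))
  · intro s hs
    rw [sum_range_eq gh]
    have hconv : ∑ t ∈ Finset.range m, gh (t : ZMod m) * gh ((s + t : ℕ) : ZMod m)
        = ∑ x : ZMod m, gh x * gh (x + (s:ZMod m)) := by
      rw [← sum_range_eq (fun x => gh x * gh (x + (s:ZMod m)))]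
      refine Finset.sum_congr rfl fun t _ => ?_
      congr 2
      push_cast
      ring
    rw [hconv]
    have hsN : (s : ZMod m) ≠ (n : ZMod m) := by
      intro h
      have h1 : ((s:ZMod m)).val = s := ZMod.val_natCast_of_lt (by omega)
      have h2 := Nval h2n hn0
      rw [h] at h1
      omega
    exact HA2 (s:ZMod m) hsN
  · intro s hs
    have hconvS : ∑ t ∈ Finset.range m, (-1:ℂ)^t * gh (t : ZMod m)
        = ∑ x : ZMod m, ee m ((n:ZMod m)*x) * gh x := by
      rw [← sum_range_eq (fun x => ee m ((n:ZMod m)*x) * gh x)]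
      refine Finset.sum_congr rfl fun t ht => ?_
      rw [ee_nmul h2n hn0, ZMod.val_natCast_of_lt (Finset.mem_range.mp ht)]
    have hconvL : ∑ t ∈ Finset.range m, (-1:ℂ)^t * gh (t : ZMod m)
          * gh ((2*(s:ℤ) - 2*(θ:ℤ) - (t:ℤ) : ℤ) : ZMod m)
        = ∑ x : ZMod m, ee m ((n:ZMod m)*x)
            * (gh x * gh ((2*(s:ZMod m) - 2*(θ:ZMod m)) - x)) := by
      rw [← sum_range_eq
        (fun x => ee m ((n:ZMod m)*x) * (gh x * gh ((2*(s:ZMod m) - 2*(θ:ZMod m)) - x)))]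
      refine Finset.sum_congr rfl fun t ht => ?_
      rw [ee_nmul h2n hn0, ZMod.val_natCast_of_lt (Finset.mem_range.mp ht),
        show (((2*(s:ℤ) - 2*(θ:ℤ) - (t:ℤ) : ℤ)) : ZMod m)
          = (2*(s:ZMod m) - 2*(θ:ZMod m)) - (t:ZMod m) by push_cast; ring]
      ring
    rw [hconvL, hconvS,
      show ((m/2 + s : ℕ) : ZMod m) = (s:ZMod m) + (n:ZMod m) by rw [hdiv]; push_cast; ring]
    exact HA3 ((s:ZMod m))


lemma hpow (s : ℕ) :
    (ζm m ^ (2*θ))^s = ee m (2*(θ:ZMod m)*(s:ZMod m)) := by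
  haveI := instNZ h2n hn0
  rw [← pow_mul, ← ee_natCast (2*θ*s)]
  congr 1
  push_cast
  ring

lemma glevel_to_B (HL : GLevel m g (ζm m ^ (2*θ))) :
    (∀ x : ZMod m, 2*x ≠ 0 →
        ∑ k : ZMod m, ee m ((n:ZMod m)*k) * (g k * g (2*x - k)) = 0)
    ∧ (∀ x : ZMod m, x ≠ 0 → g x * g (-x) = ee m ((n:ZMod m)*x))
    ∧ (∀ u : ZMod m, ee m (2*(θ:ZMod m)*u) * (g u * g (u+(n:ZMod m)))
        = g (2*u) * g (n:ZMod m)) := by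
  haveI := instNZ h2n hn0
  obtain ⟨H1, H2, H3, _⟩ := HL
  have hdiv : m / 2 = n := by omega
  have hx := hxval h2n hn0
  have H1' : ∀ s : ℕ, 1 ≤ s → s ≤ n - 1 →
      ∑ k : ZMod m, ee m ((n:ZMod m)*k) * (g k * g (2*(s:ZMod m) - k)) = 0 := by
    intro s hs1 hs2
    have h := H1 s hs1 (by omega)
    have hconv : ∑ t ∈ Finset.range m, (-1:ℂ)^t * g (t : ZMod m)
          * g ((2*(s:ℤ) - (t:ℤ) : ℤ) : ZMod m)
        = ∑ k : ZMod m, ee m ((n:ZMod m)*k) * (g k * g (2*(s:ZMod m) - k)) := by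
      rw [← sum_range_eq (fun k => ee m ((n:ZMod m)*k) * (g k * g (2*(s:ZMod m) - k)))]
      refine Finset.sum_congr rfl fun t ht => ?_
      rw [ee_nmul h2n hn0, ZMod.val_natCast_of_lt (Finset.mem_range.mp ht),
        show (((2*(s:ℤ) - (t:ℤ) : ℤ)) : ZMod m) = 2*(s:ZMod m) - (t:ZMod m) by
          push_cast; ring]
      ring
    rw [hconv] at h
    exact h
  have H2' : ∀ s : ℕ, 1 ≤ s → s ≤ n →
      g (s:ZMod m) * g (-(s:ZMod m)) = ee m ((n:ZMod m)*(s:ZMod m)) := by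
    intro s hs1 hs2
    have h := H2 s hs1 (by omega)
    rw [show ((m - s : ℕ) : ZMod m) = -(s:ZMod m) by
        rw [Nat.cast_sub (by omega), ZMod.natCast_self]; ring] at h
    rw [h, ee_nmul h2n hn0, ZMod.val_natCast_of_lt (by omega : s < m)]
  have H3' : ∀ s : ℕ, 1 ≤ s → s ≤ n - 1 →
      ee m (2*(θ:ZMod m)*(s:ZMod m)) * (g (s:ZMod m) * g ((s:ZMod m)+(n:ZMod m)))
        = g (2*(s:ZMod m)) * g (n:ZMod m) := by
    intro s hs1 hs2
    have h := H3 s hs1 (by omega)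
    rw [hpow h2n hn0 θ s, hdiv,
      show ((n + s : ℕ) : ZMod m) = (s:ZMod m) + (n:ZMod m) by push_cast; ring,
      show ((2*s : ℕ) : ZMod m) = 2*(s:ZMod m) by push_cast; ring] at h
    linear_combination h
  refine ⟨?_, ?_, ?_⟩
  · intro x hxne
    have hval : (2*x).val = 2 * (x.val % n) := by
      have h1 : 2*x = ((2*x.val : ℕ) : ZMod m) := by
        rw [Nat.cast_mul, hx x]; norm_num
      rw [h1, ZMod.val_natCast]
      generalize x.val = v
      rw [h2n]
      exact Nat.mul_mod_mul_left 2 v n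
    set s := x.val % n with hsdef
    have hs1 : 1 ≤ s := by
      rcases Nat.eq_zero_or_pos s with h0 | h
      · exfalso
        apply hxne
        have : (2*x).val = 0 := by rw [hval, h0]
        exact (ZMod.val_eq_zero _).mp this
      · exact h
    have hs2 : s ≤ n - 1 := by
      have : s < n := Nat.mod_lt _ hn0
      omega
    have h := H1' s hs1 hs2
    rwa [show 2*(s:ZMod m) = 2*x by
      rw [show (2:ZMod m)*(s:ZMod m) = ((2*s : ℕ) : ZMod m) by push_cast; ring,
        ← hval, hx]] at h
  · intro x hxne
    rcases le_or_gt x.val n with hv | hv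
    · have h := H2' x.val (by
        rcases Nat.eq_zero_or_pos x.val with h0 | h
        · exact absurd ((ZMod.val_eq_zero _).mp h0) hxne
        · exact h) hv
      rwa [hx x] at h
    · set s := m - x.val with hsdef
      have hmv : x.val < m := ZMod.val_lt x
      have h := H2' s (by omega) (by omega)
      have hxs : ((s : ℕ) : ZMod m) = -x := by
        rw [Nat.cast_sub hmv.le, ZMod.natCast_self, hx x]
        ring
      rw [hxs, neg_neg] at h
      have hee : ee m ((n:ZMod m) * -x) = ee m ((n:ZMod m) * x) := by
        rw [show (n:ZMod m) * -x = -((n:ZMod m)*x) by ring, neg_nmul h2n hn0]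
      rw [hee] at h
      linear_combination h
  · intro u
    rcases lt_trichotomy u.val n with hv | hv | hv
    · rcases Nat.eq_zero_or_pos u.val with h0 | hpos
      · have hu : u = 0 := (ZMod.val_eq_zero _).mp h0
        subst hu
        rw [mul_zero, ee_zero, mul_zero, zero_add]
        ring
      · have h := H3' u.val hpos (by omega)
        rwa [hx u] at h
    · have hu : u = (n:ZMod m) := by rw [← hx u, hv]
      subst hu
      have h2N : (n:ZMod m) + (n:ZMod m) = 0 := twoN h2n hn0
      rw [show 2*(θ:ZMod m)*(n:ZMod m) = 0 from by linear_combination (θ:ZMod m) * h2N,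
        ee_zero, show 2*(n:ZMod m) = 0 from by linear_combination h2N, h2N]
      ring
    · set s := u.val - n with hsdef
      have hmv : u.val < m := ZMod.val_lt u
      have hs1 : 1 ≤ s := by omega
      have hs2 : s ≤ n - 1 := by omega
      have hxs : ((s : ℕ) : ZMod m) = u + (n:ZMod m) := by
        rw [← hx u, show u.val = s + n by omega]
        push_cast
        linear_combination -(twoN h2n hn0)
      have h := H3' s hs1 hs2
      rw [hxs] at h
      rw [show 2*(θ:ZMod m)*(u + (n:ZMod m)) = 2*(θ:ZMod m)*u from by
          linear_combination (θ:ZMod m) * twoN h2n hn0,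
        show u + (n:ZMod m) + (n:ZMod m) = u from by linear_combination twoN h2n hn0,
        show 2*(u + (n:ZMod m)) = 2*u from by linear_combination twoN h2n hn0] at h
      linear_combination h

lemma B_to_glevel
    (HB1 : ∀ x : ZMod m, 2*x ≠ 0 →
        ∑ k : ZMod m, ee m ((n:ZMod m)*k) * (g k * g (2*x - k)) = 0)
    (HB2 : ∀ x : ZMod m, x ≠ 0 → g x * g (-x) = ee m ((n:ZMod m)*x))
    (HB3 : ∀ u : ZMod m, ee m (2*(θ:ZMod m)*u) * (g u * g (u+(n:ZMod m)))
        = g (2*u) * g (n:ZMod m)) :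
    GLevel m g (ζm m ^ (2*θ)) := by
  haveI := instNZ h2n hn0
  have hdiv : m / 2 = n := by omega
  refine ⟨?_, ?_, ?_, ?_⟩
  · intro s hs1 hs2
    have hconv : ∑ t ∈ Finset.range m, (-1:ℂ)^t * g (t : ZMod m)
          * g ((2*(s:ℤ) - (t:ℤ) : ℤ) : ZMod m)
        = ∑ k : ZMod m, ee m ((n:ZMod m)*k) * (g k * g (2*(s:ZMod m) - k)) := by
      rw [← sum_range_eq (fun k => ee m ((n:ZMod m)*k) * (g k * g (2*(s:ZMod m) - k)))]
      refine Finset.sum_congr rfl fun t ht => ?_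
      rw [ee_nmul h2n hn0, ZMod.val_natCast_of_lt (Finset.mem_range.mp ht),
        show (((2*(s:ℤ) - (t:ℤ) : ℤ)) : ZMod m) = 2*(s:ZMod m) - (t:ZMod m) by
          push_cast; ring]
      ring
    rw [hconv]
    apply HB1
    intro h
    have h1 : (2*(s:ZMod m)).val = 0 := by rw [h, ZMod.val_zero]
    rw [show (2:ZMod m)*(s:ZMod m) = ((2*s : ℕ) : ZMod m) by push_cast; ring,
      ZMod.val_natCast_of_lt (by omega : 2*s < m)] at h1
    omega
  · intro s hs1 hs2
    rw [hdiv] at hs2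
    have hsne : (s : ZMod m) ≠ 0 := by
      intro h
      have h1 : ((s:ZMod m)).val = 0 := by rw [h, ZMod.val_zero]
      rw [ZMod.val_natCast_of_lt (by omega : s < m)] at h1
      omega
    have h := HB2 (s:ZMod m) hsne
    rw [show ((m - s : ℕ) : ZMod m) = -(s:ZMod m) by
        rw [Nat.cast_sub (by omega), ZMod.natCast_self]; ring, h,
      ee_nmul h2n hn0, ZMod.val_natCast_of_lt (by omega : s < m)]
  · intro s hs1 hs2
    rw [hdiv] at hs2
    have h := HB3 (s:ZMod m)
    rw [hpow h2n hn0 θ s, hdiv,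
      show ((n + s : ℕ) : ZMod m) = (s:ZMod m) + (n:ZMod m) by push_cast; ring,
      show ((2*s : ℕ) : ZMod m) = 2*(s:ZMod m) by push_cast; ring]
    linear_combination h
  · rw [hdiv, ← pow_mul, show 2*θ*n = m*θ by rw [h2n]; ring, pow_mul, zpow_m, one_pow]

end Core

end Stmt12

theorem stmt12 (m : ℕ) (hm : 0 < m) (heven : Even m) :
    Set.BijOn
      (fun p : ℕ × (ZMod m → ℂ) =>
        ((fun s : ZMod m =>
            (1 / (m : ℂ)) *
              ∑ t ∈ Finset.range m,
                Complex.exp (2 * Real.pi * Complex.I / m) ^ (s.val * t) * p.2 (t : ZMod m),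
          Complex.exp (2 * Real.pi * Complex.I / ((m / 2 : ℕ) : ℂ)) ^ p.1) :
          (ZMod m → ℂ) × ℂ))
      {p : ℕ × (ZMod m → ℂ) | p.1 ≤ m / 2 - 1 ∧ GhatLevel m p.1 p.2}
      {p : (ZMod m → ℂ) × ℂ | GLevel m p.1 p.2} := by
  classical
  open Stmt12 in
  obtain ⟨n', hn'⟩ := heven
  set n := n' with hndef
  have h2n : m = 2 * n := by omega
  have hn0 : 0 < n := by omega
  haveI : NeZero m := ⟨hm.ne'⟩
  haveI : NeZero n := ⟨hn0.ne'⟩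
  have hdiv : m / 2 = n := by omega
  have hm0 : (m:ℂ) ≠ 0 := Nat.cast_ne_zero.mpr hm.ne'
  set ω : ℂ := Complex.exp (2 * Real.pi * Complex.I / ((m / 2 : ℕ) : ℂ)) with hωdef
  have hω : ω = ζm m ^ 2 := by
    rw [hωdef, ζm, ← Complex.exp_nat_mul]
    congr 1
    have hmC : (m : ℂ) = 2 * n := by rw [h2n]; push_cast; ring
    have hnC : ((m/2 : ℕ) : ℂ) = (n : ℂ) := by rw [hdiv]
    have hn0C : (n : ℂ) ≠ 0 := Nat.cast_ne_zero.mpr hn0.ne'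
    rw [hnC, hmC]
    field_simp
    ring
  have hωθ : ∀ θ : ℕ, ω ^ θ = ζm m ^ (2*θ) := by
    intro θ
    rw [hω, ← pow_mul]
  have hprimω : IsPrimitiveRoot ω n := by
    have : ((m/2 : ℕ) : ℂ) = ((n : ℕ) : ℂ) := by rw [hdiv]
    rw [hωdef, this]
    exact Complex.isPrimitiveRoot_exp n hn0.ne'
  have hHg : ∀ gh : ZMod m → ℂ, ∀ s : ZMod m,
      (m:ℂ) * ((1 / (m : ℂ)) *
        ∑ t ∈ Finset.range m, Complex.exp (2 * Real.pi * Complex.I / m) ^ (s.val * t)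
          * gh (t : ZMod m))
      = ∑ t : ZMod m, ee m (s*t) * gh t := by
    intro gh s
    rw [one_div, ← mul_assoc, mul_inv_cancel₀ hm0, one_mul]
    rw [← sum_range_eq (fun x => ee m (s*x) * gh x)]
    refine Finset.sum_congr rfl fun t ht => ?_
    congr 1
    rw [ee, ZMod.val_mul, zpow_mod, ZMod.val_natCast_of_lt (Finset.mem_range.mp ht)]
    rfl
  constructor
  · -- MapsTo
    rintro ⟨θ, gh⟩ ⟨hθ, hG⟩
    simp only [Set.mem_setOf_eq]
    set g : ZMod m → ℂ := fun s : ZMod m =>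
      (1 / (m : ℂ)) * ∑ t ∈ Finset.range m,
        Complex.exp (2 * Real.pi * Complex.I / m) ^ (s.val * t) * gh (t : ZMod m) with hgdef
    have Hg : ∀ s : ZMod m, (m:ℂ) * g s = ∑ t : ZMod m, ee m (s*t) * gh t := hHg gh
    have Hinv := invA gh g Hg
    obtain ⟨A1, A2, A3⟩ := ghat_to_A h2n hn0 θ gh hG
    have B1 := A_to_B1 h2n hn0 gh g Hinv A1
    have B2 := A_to_B2 h2n hn0 gh g Hinv A1 A2
    have B3 := A_to_B3 h2n hn0 θ gh g Hg Hinv A3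
    have hGL := B_to_glevel h2n hn0 θ g B1 B2 B3
    show GLevel m g (ω ^ θ)
    rw [hωθ θ]
    exact hGL
  constructor
  · -- InjOn
    rintro ⟨θ₁, gh₁⟩ ⟨hθ₁, hG₁⟩ ⟨θ₂, gh₂⟩ ⟨hθ₂, hG₂⟩ heq
    simp only [Prod.mk.injEq] at heq
    obtain ⟨hgeq, hheq⟩ := heq
    have hθeq : θ₁ = θ₂ :=
      hprimω.pow_inj (by omega) (by omega) hheq
    have hgheq : gh₁ = gh₂ := by
      set g : ZMod m → ℂ := fun s : ZMod m =>
        (1 / (m : ℂ)) * ∑ t ∈ Finset.range m,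
          Complex.exp (2 * Real.pi * Complex.I / m) ^ (s.val * t) * gh₁ (t : ZMod m) with hgdef
      have Hg1 : ∀ s : ZMod m, (m:ℂ) * g s = ∑ t : ZMod m, ee m (s*t) * gh₁ t := hHg gh₁
      have Hg2 : ∀ s : ZMod m, (m:ℂ) * g s = ∑ t : ZMod m, ee m (s*t) * gh₂ t := by
        intro s
        rw [hgeq]
        exact hHg gh₂ s
      have h1 := invA gh₁ g Hg1
      have h2 := invA gh₂ g Hg2
      funext t
      rw [h1 t, h2 t]
    exact Prod.ext hθeq hgheq
  · -- SurjOn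
    rintro ⟨g, h⟩ hGL
    simp only [Set.mem_setOf_eq] at hGL
    have h4 : h ^ n = 1 := by
      have := hGL.2.2.2
      rwa [hdiv] at this
    obtain ⟨θ, hθn, hθ⟩ := hprimω.eq_pow_of_pow_eq_one h4
    set gh : ZMod m → ℂ := fun t => ∑ s : ZMod m, ee m (-(t*s)) * g s with hghdef
    have Hinv : ∀ t : ZMod m, gh t = ∑ s : ZMod m, ee m (-(t*s)) * g s := fun t => rfl
    have Hg := invB gh g Hinv
    have hh : h = ζm m ^ (2*θ) := by rw [← hθ, hωθ]
    rw [hh] at hGL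
    obtain ⟨B1, B2, B3⟩ := glevel_to_B h2n hn0 θ g hGL
    have A1 := B_to_A1 h2n hn0 gh g Hg Hinv B1 B2
    have A2 := B_to_A2 h2n hn0 gh g Hg Hinv B2
    have A3 := B_to_A3 h2n hn0 θ gh g Hg Hinv B3
    have hGh := A_to_ghat h2n hn0 θ gh A1 A2 A3
    refine ⟨⟨θ, gh⟩, ⟨by omega, hGh⟩, ?_⟩
    have hfst : (fun s : ZMod m =>
        (1 / (m : ℂ)) * ∑ t ∈ Finset.range m,
          Complex.exp (2 * Real.pi * Complex.I / m) ^ (s.val * t) * gh (t : ZMod m)) = g := by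
      funext s
      apply mul_left_cancel₀ hm0
      rw [hHg gh s, Hg s]
    exact Prod.ext hfst hθ
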